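/- Let M be a finitely generated faithful multiplication R-module and N a proper submodule of M. The following are equivalent: (1) N is a quasi J-submodule of M; (2) M-rad(N) is a quasi J-submodule of M; (3) M-rad(N) is a J-submodule of M; (4) (M-rad(N) :_M ⟨r⟩) = M-rad(N) for every r ∈ R with r ∉ J(R), where (M-rad(N) :_M ⟨r⟩) = {m ∈ M : rm ∈ M-rad(N)}. -/

import Mathlib

open Submodule Pointwise


/-- The ideal `(J(R)M : M)` where `J(R)` is the Jacobson radical of `R`. -/
def jacobsonColon (R M : Type*) [CommRing R] [AddCommGroup M] [Module R M] : Ideal R :=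
  ((⊥ : Ideal R).jacobson • (⊤ : Submodule R M)).colon ⊤

/-- A prime submodule: a proper submodule `N` such that whenever `r • m ∈ N`,
either `m ∈ N` or `r • M ⊆ N`. -/
def IsPrimeSubmodule {R M : Type*} [CommRing R] [AddCommGroup M] [Module R M]
    (N : Submodule R M) : Prop :=
  N ≠ ⊤ ∧ ∀ (r : R) (m : M), r • m ∈ N → m ∈ N ∨ r ∈ N.colon ⊤

/-- `M`-rad(N): the intersection of all prime submodules of `M` containing `N`
(equal to `⊤` if there are none). -/
def Mrad {R M : Type*} [CommRing R] [AddCommGroup M] [Module R M]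
    (N : Submodule R M) : Submodule R M :=
  sInf {P : Submodule R M | IsPrimeSubmodule P ∧ N ≤ P}

/-- A quasi `J`-submodule. -/
def IsQuasiJSubmodule {R M : Type*} [CommRing R] [AddCommGroup M] [Module R M]
    (N : Submodule R M) : Prop :=
  N ≠ ⊤ ∧ ∀ (r : R) (m : M), r • m ∈ N → r ∉ jacobsonColon R M → m ∈ Mrad N

/-- A `J`-submodule. -/
def IsJSubmodule {R M : Type*} [CommRing R] [AddCommGroup M] [Module R M]
    (N : Submodule R M) : Prop :=
  N ≠ ⊤ ∧ ∀ (r : R) (m : M), r • m ∈ N → r ∉ jacobsonColon R M → m ∈ N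


section Aux
variable {R M : Type*} [CommRing R] [AddCommGroup M] [Module R M]

lemma N_le_Mrad (N : Submodule R M) : N ≤ Mrad N :=
  le_sInf fun _ hP => hP.2

lemma Mrad_idem (N : Submodule R M) : Mrad (Mrad N) = Mrad N := by
  unfold Mrad
  congr 1
  ext P
  simp only [Set.mem_setOf_eq, and_congr_right_iff]
  intro hP
  exact ⟨fun h => (N_le_Mrad N).trans h, fun h => sInf_le ⟨hP, h⟩⟩

lemma not_mem_jacobson_bot {r : R} (h : r ∉ (⊥ : Ideal R).jacobson) :
    ∃ mx : Ideal R, mx.IsMaximal ∧ r ∉ mx := by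
  by_contra hc
  push_neg at hc
  exact h (Submodule.mem_sInf.2 fun p hp => hc p hp.2)

lemma pow_not_mem_jacobson_bot {r : R} (h : r ∉ (⊥ : Ideal R).jacobson) (n : ℕ) :
    r ^ n ∉ (⊥ : Ideal R).jacobson := by
  obtain ⟨mx, hmx, hr⟩ := not_mem_jacobson_bot h
  intro hc
  have : r ^ n ∈ mx := Submodule.mem_sInf.1 hc mx ⟨bot_le, hmx⟩
  exact hr (hmx.isPrime.mem_of_pow_mem n this)

variable [Module.Finite R M]
variable (hfaithful : ∀ r : R, (∀ m : M, r • m = 0) → r = 0)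
variable (hmult : ∀ N : Submodule R M, N = N.colon ⊤ • (⊤ : Submodule R M))

include hfaithful in
lemma max_smul_top_ne_top {mx : Ideal R} (hmx : mx.IsMaximal) :
    mx • (⊤ : Submodule R M) ≠ ⊤ := by
  intro h
  obtain ⟨r, hr1, hr0⟩ := Submodule.exists_sub_one_mem_and_smul_eq_zero_of_fg_of_le_smul
    mx ⊤ (Module.Finite.fg_top) (by rw [h])
  have : r = 0 := hfaithful r fun m => hr0 m trivial
  rw [this, zero_sub] at hr1
  exact hmx.ne_top (Ideal.eq_top_iff_one mx |>.2 (by simpa using mx.neg_mem hr1))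

include hfaithful hmult in
lemma exists_cyclic {mx : Ideal R} (hmx : mx.IsMaximal) :
    ∃ (m : M) (x : R), x ∉ mx ∧ ∀ y : M, x • y ∈ span R {m} := by
  have hne := max_smul_top_ne_top (M := M) hfaithful hmx
  have : ∃ m : M, m ∉ mx • (⊤ : Submodule R M) := by
    by_contra hc
    push_neg at hc
    exact hne (eq_top_iff.2 fun m _ => hc m)
  obtain ⟨m, hm⟩ := this
  by_cases hK : (span R {m}).colon ⊤ ≤ mx
  · exfalso
    apply hm
    have : (m : M) ∈ span R {m} := mem_span_singleton_self m
    rw [hmult (span R {m})] at this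
    exact Submodule.smul_mono_left hK this
  · obtain ⟨x, hxK, hxmx⟩ := SetLike.not_le_iff_exists.1 hK
    exact ⟨m, x, hxmx, fun y => Submodule.mem_colon.1 hxK y trivial⟩

include hfaithful hmult in
lemma cancel (I : Ideal R) : (I • (⊤ : Submodule R M)).colon ⊤ = I := by
  apply le_antisymm
  · intro r hr
    by_contra hrI
    set K : Ideal R := Submodule.comap (LinearMap.mulRight R r) I with hKdef
    have hKmem : ∀ y : R, y ∈ K ↔ y * r ∈ I := fun y => Iff.rfl
    have hKne : K ≠ ⊤ := by
      intro h
      exact hrI (by have : (1:R) ∈ K := h ▸ trivial; simpa using (hKmem 1).1 this)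
    obtain ⟨mx, hmx, hKmx⟩ := Ideal.exists_le_maximal K hKne
    obtain ⟨m, x, hxmx, hxcyc⟩ := exists_cyclic hfaithful hmult hmx
    -- (x*r) • m ∈ I • span {m}
    have h1 : (x * r) • m ∈ I • span R {m} := by
      have hrm : r • m ∈ I • (⊤ : Submodule R M) := Submodule.mem_colon.1 hr m trivial
      have : x • (r • m) ∈ I • span R {m} := by
        refine Submodule.smul_induction_on hrm ?_ ?_
        · intro a ha n _
          rw [smul_comm]
          exact Submodule.smul_mem_smul ha (hxcyc n)
        · intro y z hy hz
          rw [smul_add]; exact Submodule.add_mem _ hy hz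
      rwa [mul_smul]
    -- I • span {m} ≤ image of I under (· • m)
    have h2 : I • span R {m} ≤ Submodule.map (LinearMap.toSpanSingleton R M m) I := by
      refine Submodule.smul_le.2 fun a ha y hy => ?_
      obtain ⟨c, rfl⟩ := mem_span_singleton.1 hy
      exact ⟨a * c, I.mul_mem_right c ha, by
        simp [LinearMap.toSpanSingleton_apply, mul_smul]⟩
    obtain ⟨c, hcI, hcm⟩ := h2 h1
    simp only [LinearMap.toSpanSingleton_apply] at hcm
    -- (x*r - c) • m = 0
    have h3 : (x * r - c) • m = 0 := by rw [sub_smul, hcm, sub_self]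
    have h4 : ∀ y : M, (x * (x * r - c)) • y = 0 := by
      intro y
      obtain ⟨d, hd⟩ := mem_span_singleton.1 (hxcyc y)
      rw [mul_comm x, mul_smul, ← hd, smul_comm, h3, smul_zero]
    have h5 : x * (x * r - c) = 0 := hfaithful _ h4
    have h6 : x * x * r ∈ I := by
      have heq : x * x * r = x * c := by linear_combination h5
      rw [heq]; exact I.mul_mem_left x hcI
    have hxxK : x * x ∈ K := (hKmem (x * x)).2 h6
    exact hxmx (hmx.isPrime.mem_of_pow_mem 2 (by rw [pow_two]; exact hKmx hxxK))
  · intro a ha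
    exact Submodule.mem_colon.2 fun y _ => Submodule.smul_mem_smul ha trivial

end Aux
section Aux2
variable {R M : Type*} [CommRing R] [AddCommGroup M] [Module R M]
variable [Module.Finite R M]
variable (hfaithful : ∀ r : R, (∀ m : M, r • m = 0) → r = 0)
variable (hmult : ∀ N : Submodule R M, N = N.colon ⊤ • (⊤ : Submodule R M))

include hfaithful hmult in
lemma prime_smul_top {p : Ideal R} (hp : p.IsPrime) :
    IsPrimeSubmodule (p • (⊤ : Submodule R M)) := by
  obtain ⟨mx, hmx, hpmx⟩ := Ideal.exists_le_maximal p hp.ne_top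
  constructor
  · intro h
    have hle2 : p • (⊤ : Submodule R M) ≤ mx • ⊤ := Submodule.smul_mono_left hpmx
    rw [h] at hle2
    exact max_smul_top_ne_top hfaithful hmx (top_le_iff.1 hle2)
  · intro r m hrm
    by_cases hrp : r ∈ p
    · right; exact Submodule.mem_colon.2 fun y _ => Submodule.smul_mem_smul hrp trivial
    · left
      have hKle : (span R {m}).colon ⊤ ≤ p := by
        intro x hx
        have hmem : r * x ∈ (p • (⊤ : Submodule R M)).colon ⊤ := by
          refine Submodule.mem_colon.2 fun y _ => ?_
          obtain ⟨c, hc⟩ := mem_span_singleton.1 (Submodule.mem_colon.1 hx y trivial)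
          rw [mul_smul, ← hc, smul_comm]
          exact Submodule.smul_mem _ c hrm
        rw [cancel hfaithful hmult] at hmem
        exact (hp.mem_or_mem hmem).resolve_left hrp
      have hms : m ∈ span R {m} := mem_span_singleton_self m
      rw [hmult (span R {m})] at hms
      exact Submodule.smul_mono_left hKle hms

lemma colon_prime {P : Submodule R M} (h : IsPrimeSubmodule P) : (P.colon ⊤).IsPrime := by
  constructor
  · intro hc
    have h1 : (1 : R) ∈ P.colon ⊤ := hc ▸ trivial
    exact h.1 (eq_top_iff.2 fun m _ => by simpa using Submodule.mem_colon.1 h1 m trivial)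
  · intro a b hab
    by_cases ha : a ∈ P.colon ⊤
    · left; exact ha
    · right
      refine Submodule.mem_colon.2 fun y _ => ?_
      have : a • (b • y) ∈ P := by
        rw [← mul_smul]; exact Submodule.mem_colon.1 hab y trivial
      exact (h.2 a (b • y) this).resolve_right ha

include hmult in
lemma radical_smul_le_Mrad (N : Submodule R M) :
    (N.colon ⊤).radical • (⊤ : Submodule R M) ≤ Mrad N := by
  refine le_sInf ?_
  rintro P ⟨hP, hNP⟩
  have hq := colon_prime hP
  have hIq : N.colon ⊤ ≤ P.colon ⊤ := fun x hx =>
    Submodule.mem_colon.2 fun y hy => hNP (Submodule.mem_colon.1 hx y hy)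
  have hrad : (N.colon ⊤).radical ≤ P.colon ⊤ := hq.radical_le_iff.2 hIq
  calc (N.colon ⊤).radical • (⊤ : Submodule R M) ≤ (P.colon ⊤) • ⊤ :=
        Submodule.smul_mono_left hrad
    _ = P := (hmult P).symm

include hfaithful hmult in
lemma Mrad_colon_le_radical (N : Submodule R M) :
    (Mrad N).colon ⊤ ≤ (N.colon ⊤).radical := by
  intro b hb
  rw [Ideal.radical_eq_sInf]
  refine Submodule.mem_sInf.2 ?_
  rintro p ⟨hIp, hp⟩
  have hPprime := prime_smul_top hfaithful hmult hp
  have hNle : N ≤ p • (⊤ : Submodule R M) := by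
    rw [hmult N]; exact Submodule.smul_mono_left hIp
  have hMle : Mrad N ≤ p • (⊤ : Submodule R M) := sInf_le ⟨hPprime, hNle⟩
  have hbm : b ∈ (p • (⊤ : Submodule R M)).colon ⊤ :=
    Submodule.mem_colon.2 fun y hy => hMle (Submodule.mem_colon.1 hb y hy)
  rwa [cancel hfaithful hmult] at hbm

include hfaithful hmult in
lemma Mrad_ne_top (N : Submodule R M) (hN : N ≠ ⊤) : Mrad N ≠ ⊤ := by
  have hIne : N.colon ⊤ ≠ ⊤ := by
    intro h
    exact hN (by rw [hmult N, h, Submodule.top_smul])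
  obtain ⟨mx, hmx, hle⟩ := Ideal.exists_le_maximal _ hIne
  have hP := prime_smul_top hfaithful hmult hmx.isPrime
  have hNle : N ≤ mx • (⊤ : Submodule R M) := by
    rw [hmult N]; exact Submodule.smul_mono_left hle
  intro h
  have hle2 : Mrad N ≤ mx • (⊤ : Submodule R M) := sInf_le ⟨hP, hNle⟩
  rw [h] at hle2
  exact max_smul_top_ne_top hfaithful hmx (top_le_iff.1 hle2)

end Aux2

theorem stmt17 {R M : Type*} [CommRing R] [AddCommGroup M] [Module R M]
    [Module.Finite R M]
    (hfaithful : ∀ r : R, (∀ m : M, r • m = 0) → r = 0)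
    (hmult : ∀ N : Submodule R M, N = N.colon ⊤ • (⊤ : Submodule R M))
    (N : Submodule R M) (hN : N ≠ ⊤) :
    List.TFAE [IsQuasiJSubmodule N,
      IsQuasiJSubmodule (Mrad N),
      IsJSubmodule (Mrad N),
      ∀ r : R, r ∉ (⊥ : Ideal R).jacobson →
        {m : M | r • m ∈ Mrad N} = (Mrad N : Set M)] := by
  have hJC : jacobsonColon R M = (⊥ : Ideal R).jacobson := cancel hfaithful hmult _
  tfae_have 1 → 3
  · intro h1
    refine ⟨Mrad_ne_top hfaithful hmult N hN, ?_⟩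
    intro r m hrm hrJC
    rw [hJC] at hrJC
    have hquasi : ∀ a b : R, a * b ∈ N.colon ⊤ → a ∉ (⊥ : Ideal R).jacobson →
        b ∈ (N.colon ⊤).radical := by
      intro a b hab ha
      apply Mrad_colon_le_radical hfaithful hmult N
      refine Submodule.mem_colon.2 fun y _ => ?_
      have hmem : a • (b • y) ∈ N := by
        rw [← mul_smul]; exact Submodule.mem_colon.1 hab y trivial
      exact h1.2 a (b • y) hmem (by rw [hJC]; exact ha)
    have hRL : ∀ x : R, r * x ∈ (N.colon ⊤).radical → x ∈ (N.colon ⊤).radical := by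
      intro x hx
      obtain ⟨n, hn⟩ := hx
      rcases Nat.eq_zero_or_pos n with h0 | hpos
      · subst h0
        rw [pow_zero] at hn
        have htop : N.colon ⊤ = ⊤ := (Ideal.eq_top_iff_one _).2 hn
        exact Ideal.le_radical (by rw [htop]; trivial)
      · rw [mul_pow] at hn
        have hxn : x ^ n ∈ (N.colon ⊤).radical :=
          hquasi (r ^ n) (x ^ n) hn (pow_not_mem_jacobson_bot hrJC n)
        rw [← Ideal.radical_idem (N.colon ⊤)]
        exact ⟨n, hxn⟩
    have hK : (span R {m}).colon ⊤ ≤ (N.colon ⊤).radical := by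
      intro x hx
      apply hRL
      apply Mrad_colon_le_radical hfaithful hmult N
      refine Submodule.mem_colon.2 fun y _ => ?_
      obtain ⟨c, hc⟩ := mem_span_singleton.1 (Submodule.mem_colon.1 hx y trivial)
      rw [mul_smul, ← hc, smul_comm]
      exact Submodule.smul_mem _ c hrm
    have hm : m ∈ (N.colon ⊤).radical • (⊤ : Submodule R M) := by
      have hms : m ∈ span R {m} := mem_span_singleton_self m
      rw [hmult (span R {m})] at hms
      exact Submodule.smul_mono_left hK hms
    exact radical_smul_le_Mrad hmult N hm
  tfae_have 3 → 2
  · intro h3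
    exact ⟨h3.1, fun r m hrm hr => by rw [Mrad_idem]; exact h3.2 r m hrm hr⟩
  tfae_have 2 → 1
  · intro h2
    refine ⟨hN, fun r m hrm hr => ?_⟩
    have h := h2.2 r m (N_le_Mrad N hrm) hr
    rwa [Mrad_idem] at h
  tfae_have 3 → 4
  · intro h3 r hr
    ext m
    simp only [Set.mem_setOf_eq, SetLike.mem_coe]
    exact ⟨fun h => h3.2 r m h (by rw [hJC]; exact hr),
      fun h => Submodule.smul_mem _ r h⟩
  tfae_have 4 → 3
  · intro h4
    refine ⟨Mrad_ne_top hfaithful hmult N hN, fun r m hrm hr => ?_⟩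
    rw [hJC] at hr
    have hms : m ∈ {m : M | r • m ∈ Mrad N} := hrm
    rwa [h4 r hr] at hms
  tfae_finish
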